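/- If the Lie algebra L generated by iH₀' = Σ ε_m h_m and iH₁ = Σ δ_m y_m in the sp(ℓ) basis (all ε_m, δ_m nonzero) contains y_ℓ, then L contains x_m, y_m, and h_m for all 1 ≤ m ≤ ℓ. -/

import Mathlib

open Matrix

attribute [local instance 100] LieRing.ofAssociativeRing

/-- The `N×N` standard matrix unit `e_{a,b}` (1-based indices). -/
noncomputable def e (N a b : ℕ) : Matrix (Fin N) (Fin N) ℂ :=
  Matrix.of fun i j => if (i : ℕ) + 1 = a ∧ (j : ℕ) + 1 = b then 1 else 0

/-- `x_{a,b} = e_{a,b} - e_{b,a}`. -/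
noncomputable def X (N a b : ℕ) : Matrix (Fin N) (Fin N) ℂ := e N a b - e N b a

/-- `y_{a,b} = i (e_{a,b} + e_{b,a})`. -/
noncomputable def Y (N a b : ℕ) : Matrix (Fin N) (Fin N) ℂ :=
  Complex.I • (e N a b + e N b a)

/-- Cartan generator of `sp(ℓ)`: `h_m = i (e_{m,m} - e_{m+ℓ,m+ℓ})`. -/
noncomputable def hC (l m : ℕ) : Matrix (Fin (2 * l)) (Fin (2 * l)) ℂ :=
  Complex.I • (e (2 * l) m m - e (2 * l) (m + l) (m + l))

/-- Generators `x_m` of `sp(ℓ)`: `x_m = x_{ε_m - ε_{m+1}}` for `m < ℓ`,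
`x_ℓ = x_{2ε_ℓ} = x_{2ℓ,ℓ}`. -/
noncomputable def xC (l m : ℕ) : Matrix (Fin (2 * l)) (Fin (2 * l)) ℂ :=
  if m = l then X (2 * l) (2 * l) l
  else X (2 * l) (m + 1) m - X (2 * l) (m + l) (m + l + 1)

/-- Generators `y_m` of `sp(ℓ)`: `y_m = y_{ε_m - ε_{m+1}}` for `m < ℓ`,
`y_ℓ = y_{2ε_ℓ} = y_{2ℓ,ℓ}`. -/
noncomputable def yC (l m : ℕ) : Matrix (Fin (2 * l)) (Fin (2 * l)) ℂ :=
  if m = l then Y (2 * l) (2 * l) l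
  else Y (2 * l) (m + 1) m - Y (2 * l) (m + l) (m + l + 1)

set_option linter.unreachableTactic false
set_option linter.unusedTactic false

section Helpers

lemma emm {N b c : ℕ} (a d : ℕ) (h : b ≠ c) : e N a b * e N c d = 0 := by
  ext i j
  simp only [Matrix.mul_apply, e, Matrix.of_apply, Matrix.zero_apply]
  apply Finset.sum_eq_zero
  intro k _
  by_cases h1 : (i:ℕ)+1 = a ∧ (k:ℕ)+1 = b
  · rw [if_pos h1, if_neg]; ring_nf
    rintro ⟨hk, -⟩; exact h (h1.2 ▸ hk ▸ rfl)
  · rw [if_neg h1]; ring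

lemma eme {N b : ℕ} (a d : ℕ) (h1 : 1 ≤ b) (h2 : b ≤ N) : e N a b * e N b d = e N a d := by
  ext i j
  simp only [Matrix.mul_apply, e, Matrix.of_apply]
  have hb : b - 1 < N := by omega
  rw [Finset.sum_eq_single (⟨b-1, hb⟩ : Fin N)]
  · simp only []
    have : (b-1) + 1 = b := by omega
    by_cases hia : (i:ℕ)+1 = a <;> by_cases hjd : (j:ℕ)+1 = d <;>
      simp [hia, hjd, this]
  · intro k _ hk
    have : (k:ℕ) + 1 ≠ b := by
      intro hc; apply hk; apply Fin.ext; simp; omega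
    simp [this]
  · intro hc; exact absurd (Finset.mem_univ _) hc

lemma diag_mul {N a : ℕ} (c d : ℕ) (h1 : 1 ≤ a) (h2 : a ≤ N) :
    e N a a * e N c d = (if a = c then (1:ℂ) else 0) • e N c d := by
  by_cases h : a = c
  · subst h; rw [eme _ _ h1 h2, if_pos rfl, one_smul]
  · rw [emm _ _ h, if_neg h, zero_smul]

lemma mul_diag {N a : ℕ} (c d : ℕ) (h1 : 1 ≤ a) (h2 : a ≤ N) :
    e N c d * e N a a = (if a = d then (1:ℂ) else 0) • e N c d := by
  by_cases h : a = d
  · subst h; rw [eme _ _ h1 h2, if_pos rfl, one_smul]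
  · rw [emm _ _ (fun hc => h hc.symm), if_neg h, zero_smul]

lemma hbr {l a : ℕ} (h1 : 1 ≤ a) (h2 : a ≤ l) (c d : ℕ) :
    ⁅hC l a, e (2*l) c d⁆ =
      (Complex.I * (((if a = c then 1 else 0) - (if a = d then 1 else 0))
        - ((if a + l = c then 1 else 0) - (if a + l = d then 1 else 0)))) • e (2*l) c d := by
  rw [hC, smul_lie, Ring.lie_def, sub_mul, mul_sub,
    diag_mul c d h1 (by omega), mul_diag c d h1 (by omega),
    diag_mul c d (by omega : 1 ≤ a + l) (by omega), mul_diag c d (by omega : 1 ≤ a + l) (by omega)]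
  module

lemma br00 {N a b c d : ℕ} (h1 : b ≠ c) (h2 : d ≠ a) : ⁅e N a b, e N c d⁆ = 0 := by
  rw [Ring.lie_def, emm _ _ h1, emm _ _ h2, sub_zero]

lemma brB {N a b : ℕ} (hb1 : 1 ≤ b) (hb2 : b ≤ N) (ha1 : 1 ≤ a) (ha2 : a ≤ N) :
    ⁅e N a b, e N b a⁆ = e N a a - e N b b := by
  rw [Ring.lie_def, eme _ _ hb1 hb2, eme _ _ ha1 ha2]

lemma hy0 {l a m : ℕ} (ha1 : 1 ≤ a) (ha2 : a ≤ l) (hm1 : 1 ≤ m) (hml : m < l)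
    (h1 : a ≠ m) (h2 : a ≠ m + 1) : ⁅hC l a, yC l m⁆ = 0 := by
  rw [yC, if_neg (by omega : ¬ m = l)]
  simp only [Y, lie_sub, lie_add, lie_smul, hbr ha1 ha2]
  simp [show a ≠ m + 1 from h2, show a ≠ m from h1,
    show a + l ≠ m + 1 by omega, show a + l ≠ m by omega,
    show a ≠ m + l by omega, show a ≠ m + l + 1 by omega,
    show a + l ≠ m + l by omega, show a + l ≠ m + l + 1 by omega]

lemma hy_self {l m : ℕ} (hm1 : 1 ≤ m) (hml : m < l) :
    ⁅hC l m, yC l m⁆ = xC l m := by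
  rw [yC, if_neg (by omega : ¬ m = l), xC, if_neg (by omega : ¬ m = l)]
  simp only [Y, X, lie_sub, lie_add, lie_smul, hbr hm1 (by omega : m ≤ l)]
  simp only [show m ≠ m + 1 by omega, show m + l ≠ m + 1 by omega,
    show m + l ≠ m by omega, show m ≠ m + l by omega, show m ≠ m + l + 1 by omega,
    show m + l ≠ m + l + 1 by omega, eq_self_iff_true, if_true, ite_false, ite_true,
    if_false]
  match_scalars <;> (try ring_nf) <;>
    (try simp [Complex.I_mul_I, Complex.I_sq]) <;> (try ring_nf) <;> (try norm_num)

lemma hy_next {l m : ℕ} (hm1 : 1 ≤ m) (hml : m < l) :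
    ⁅hC l (m+1), yC l m⁆ = -xC l m := by
  rw [yC, if_neg (by omega : ¬ m = l), xC, if_neg (by omega : ¬ m = l)]
  simp only [Y, X, lie_sub, lie_add, lie_smul, hbr (by omega : 1 ≤ m + 1) (by omega : m + 1 ≤ l)]
  simp only [show m + 1 ≠ m by omega, show m + 1 + l ≠ m + 1 by omega,
    show m + 1 + l ≠ m by omega, show m + 1 ≠ m + l by omega,
    show m + 1 ≠ m + l + 1 by omega, show m + 1 + l ≠ m + l by omega,
    show m + 1 + l = m + l + 1 by omega,
    eq_self_iff_true, if_true, ite_false, ite_true, if_false]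
  match_scalars <;> (try ring_nf) <;>
    (try simp [Complex.I_mul_I, Complex.I_sq, show l ≠ 0 by omega,
      show m + l + 1 ≠ m by omega, show 1 + m + l ≠ m by omega]) <;>
    (try ring_nf) <;> (try norm_num)

lemma hx_next {l m : ℕ} (hm1 : 1 ≤ m) (hml : m < l) :
    ⁅hC l (m+1), xC l m⁆ = yC l m := by
  rw [yC, if_neg (by omega : ¬ m = l), xC, if_neg (by omega : ¬ m = l)]
  simp only [Y, X, lie_sub, lie_add, lie_smul, hbr (by omega : 1 ≤ m + 1) (by omega : m + 1 ≤ l)]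
  simp only [show m + 1 ≠ m by omega, show m + 1 + l ≠ m + 1 by omega,
    show m + 1 + l ≠ m by omega, show m + 1 ≠ m + l by omega,
    show m + 1 ≠ m + l + 1 by omega, show m + 1 + l ≠ m + l by omega,
    show m + 1 + l = m + l + 1 by omega,
    eq_self_iff_true, if_true, ite_false, ite_true, if_false]
  match_scalars <;> (try ring_nf) <;>
    (try simp [Complex.I_mul_I, Complex.I_sq, show l ≠ 0 by omega,
      show m + l + 1 ≠ m by omega, show 1 + m + l ≠ m by omega]) <;>
    (try ring_nf) <;> (try norm_num)

lemma hyl0 {l a : ℕ} (ha1 : 1 ≤ a) (hal : a < l) : ⁅hC l a, yC l l⁆ = 0 := by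
  rw [yC, if_pos rfl]
  simp only [Y, lie_add, lie_smul, hbr ha1 (by omega : a ≤ l)]
  simp [show a ≠ 2 * l by omega, show a ≠ l by omega, show a ≠ 0 by omega,
    show a + l ≠ 2 * l by omega, show a + l ≠ l by omega]

lemma hyl_self {l : ℕ} (hl : 1 ≤ l) : ⁅hC l l, yC l l⁆ = (2:ℝ) • xC l l := by
  rw [yC, if_pos rfl, xC, if_pos rfl]
  simp only [Y, X, lie_add, lie_smul, hbr hl (le_refl l)]
  simp only [show l + l = 2 * l by omega, show l ≠ 2 * l by omega,
    eq_self_iff_true, if_true, ite_false, ite_true, if_false]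
  match_scalars <;> (try ring_nf) <;>
    (try simp [Complex.I_mul_I, Complex.I_sq, show l ≠ 0 by omega,
      show ¬ 2*l = l by omega]) <;> (try ring_nf) <;> (try norm_num)

lemma xyl {l : ℕ} (hl : 1 ≤ l) : ⁅xC l l, yC l l⁆ = (-2:ℝ) • hC l l := by
  rw [yC, if_pos rfl, xC, if_pos rfl, X, Y, hC, show l + l = 2 * l by omega]
  simp only [lie_add, lie_smul, add_lie, sub_lie, lie_self,
    brB (by omega : 1 ≤ l) (by omega : l ≤ 2*l) (by omega : 1 ≤ 2*l) (le_refl (2*l)),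
    brB (by omega : 1 ≤ 2*l) (le_refl (2*l)) (by omega : 1 ≤ l) (by omega : l ≤ 2*l)]
  match_scalars <;> (try ring_nf) <;>
    (try simp [Complex.I_mul_I, Complex.I_sq]) <;> (try ring_nf) <;> (try norm_num)

lemma xy {l m : ℕ} (hm1 : 1 ≤ m) (hml : m < l) :
    ⁅xC l m, yC l m⁆ = (2:ℝ) • hC l (m+1) - (2:ℝ) • hC l m := by
  have e1 : ⁅e (2*l) (m+1) m, e (2*l) m (m+1)⁆ = e (2*l) (m+1) (m+1) - e (2*l) m m :=
    brB (by omega) (by omega) (by omega) (by omega)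
  have e2 : ⁅e (2*l) m (m+1), e (2*l) (m+1) m⁆ = e (2*l) m m - e (2*l) (m+1) (m+1) :=
    brB (by omega) (by omega) (by omega) (by omega)
  have e3 : ⁅e (2*l) (m+l) (m+l+1), e (2*l) (m+l+1) (m+l)⁆
      = e (2*l) (m+l) (m+l) - e (2*l) (m+l+1) (m+l+1) :=
    brB (by omega) (by omega) (by omega) (by omega)
  have e4 : ⁅e (2*l) (m+l+1) (m+l), e (2*l) (m+l) (m+l+1)⁆
      = e (2*l) (m+l+1) (m+l+1) - e (2*l) (m+l) (m+l) :=
    brB (by omega) (by omega) (by omega) (by omega)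
  have z1 : ⁅e (2*l) (m+1) m, e (2*l) (m+l) (m+l+1)⁆ = 0 := br00 (by omega) (by omega)
  have z2 : ⁅e (2*l) (m+1) m, e (2*l) (m+l+1) (m+l)⁆ = 0 := br00 (by omega) (by omega)
  have z3 : ⁅e (2*l) m (m+1), e (2*l) (m+l) (m+l+1)⁆ = 0 := br00 (by omega) (by omega)
  have z4 : ⁅e (2*l) m (m+1), e (2*l) (m+l+1) (m+l)⁆ = 0 := br00 (by omega) (by omega)
  have z5 : ⁅e (2*l) (m+l) (m+l+1), e (2*l) (m+1) m⁆ = 0 := br00 (by omega) (by omega)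
  have z6 : ⁅e (2*l) (m+l) (m+l+1), e (2*l) m (m+1)⁆ = 0 := br00 (by omega) (by omega)
  have z7 : ⁅e (2*l) (m+l+1) (m+l), e (2*l) (m+1) m⁆ = 0 := br00 (by omega) (by omega)
  have z8 : ⁅e (2*l) (m+l+1) (m+l), e (2*l) m (m+1)⁆ = 0 := br00 (by omega) (by omega)
  rw [yC, if_neg (by omega : ¬ m = l), xC, if_neg (by omega : ¬ m = l)]
  simp only [Y, X, hC, lie_add, lie_sub, lie_smul, add_lie, sub_lie, lie_self,
    e1, e2, e3, e4, z1, z2, z3, z4, z5, z6, z8, z7, show m + 1 + l = m + l + 1 by omega]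
  match_scalars <;> (try ring_nf) <;>
    (try simp [Complex.I_mul_I, Complex.I_sq]) <;> (try ring_nf) <;> (try norm_num)

lemma lie_sum' {n : ℕ} (s : Finset ℕ) (f : ℕ → Matrix (Fin n) (Fin n) ℂ)
    (y : Matrix (Fin n) (Fin n) ℂ) : ⁅y, ∑ i ∈ s, f i⁆ = ∑ i ∈ s, ⁅y, f i⁆ := by
  induction s using Finset.cons_induction with
  | empty => simp
  | cons a s ha ih => rw [Finset.sum_cons, Finset.sum_cons, lie_add, ih]

lemma sum_lie' {n : ℕ} (s : Finset ℕ) (f : ℕ → Matrix (Fin n) (Fin n) ℂ)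
    (y : Matrix (Fin n) (Fin n) ℂ) : ⁅∑ i ∈ s, f i, y⁆ = ∑ i ∈ s, ⁅f i, y⁆ := by
  induction s using Finset.cons_induction with
  | empty => simp
  | cons a s ha ih => rw [Finset.sum_cons, Finset.sum_cons, add_lie, ih]

lemma H0_br {l : ℕ} (hl : 1 ≤ l) (ε : ℕ → ℝ) :
    ⁅∑ a ∈ Finset.Icc 1 l, ε a • hC l a, yC l l⁆ = (2 * ε l) • xC l l := by
  rw [sum_lie', Finset.sum_eq_single l]
  · rw [smul_lie, hyl_self hl, smul_smul, mul_comm (ε l) 2]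
  · intro a ha hne
    rcases Finset.mem_Icc.mp ha with ⟨h1, h2⟩
    rw [smul_lie, hyl0 h1 (by omega), smul_zero]
  · intro h; exact absurd (Finset.mem_Icc.mpr ⟨hl, le_refl l⟩) h

lemma H1_br {l m : ℕ} (hm1 : 1 ≤ m) (hml : m < l) (δ : ℕ → ℝ) :
    ⁅hC l (m+1), ∑ k ∈ Finset.Icc 1 l, δ k • yC l k⁆ =
      δ m • (-xC l m) + (if m + 1 = l then 2 * δ l else δ (m+1)) • xC l (m+1) := by
  rw [lie_sum', Finset.sum_eq_add_of_mem m (m+1)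
    (Finset.mem_Icc.mpr ⟨hm1, by omega⟩) (Finset.mem_Icc.mpr ⟨by omega, by omega⟩)
    (by omega) ?_]
  · congr 1
    · rw [lie_smul, hy_next hm1 hml]
    · by_cases hml' : m + 1 = l
      · rw [if_pos hml', lie_smul, hml', hyl_self (by omega), smul_smul, mul_comm (δ l) 2]
      · rw [if_neg hml', lie_smul, hy_self (by omega) (by omega)]
  · intro k hk hkk
    rcases Finset.mem_Icc.mp hk with ⟨h1k, hkl⟩
    rw [lie_smul]
    by_cases hkl' : k = l
    · subst hkl'
      rw [hyl0 (by omega) (by omega), smul_zero]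
    · rw [hy0 (by omega) (by omega) h1k (by omega)
        (by omega) (by omega), smul_zero]

end Helpers

/-- Lemma C: if the Lie algebra `L` generated by
`iH₀' = Σ ε_m h_m` and `iH₁ = Σ δ_m y_m` in the `sp(ℓ)` basis (all
`ε_m, δ_m` nonzero) contains `y_ℓ`, then `L` contains `x_m`, `y_m` and `h_m`
for all `1 ≤ m ≤ ℓ`. -/
theorem lemma_sp (l : ℕ) (ε δ : ℕ → ℝ)
    (hε : ∀ m, 1 ≤ m → m ≤ l → ε m ≠ 0) (hδ : ∀ m, 1 ≤ m → m ≤ l → δ m ≠ 0)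
    (H0 H1 : Matrix (Fin (2 * l)) (Fin (2 * l)) ℂ)
    (hH0 : H0 = ∑ m ∈ Finset.Icc 1 l, ε m • hC l m)
    (hH1 : H1 = ∑ m ∈ Finset.Icc 1 l, δ m • yC l m)
    (hyl : yC l l ∈ LieSubalgebra.lieSpan ℝ
      (Matrix (Fin (2 * l)) (Fin (2 * l)) ℂ) {H0, H1}) :
    ∀ m, 1 ≤ m → m ≤ l →
      xC l m ∈ LieSubalgebra.lieSpan ℝ (Matrix (Fin (2 * l)) (Fin (2 * l)) ℂ)
          {H0, H1} ∧
      yC l m ∈ LieSubalgebra.lieSpan ℝ (Matrix (Fin (2 * l)) (Fin (2 * l)) ℂ)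
          {H0, H1} ∧
      hC l m ∈ LieSubalgebra.lieSpan ℝ (Matrix (Fin (2 * l)) (Fin (2 * l)) ℂ)
          {H0, H1} := by
  intro m hm1 hml2
  set S := LieSubalgebra.lieSpan ℝ (Matrix (Fin (2 * l)) (Fin (2 * l)) ℂ) {H0, H1}
    with hSdef
  have hl : 1 ≤ l := le_trans hm1 hml2
  have hH0m : H0 ∈ S := LieSubalgebra.subset_lieSpan (Set.mem_insert _ _)
  have hH1m : H1 ∈ S := LieSubalgebra.subset_lieSpan (Set.mem_insert_of_mem _ rfl)
  have key : ∀ j k, 1 ≤ k → k + j = l → xC l k ∈ S ∧ yC l k ∈ S ∧ hC l k ∈ S := by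
    intro j
    induction j with
    | zero =>
      intro k hk1 hkl
      have hkl' : k = l := by omega
      subst hkl'
      have hx : xC k k ∈ S := by
        have hne : (2 * ε k) ≠ 0 := mul_ne_zero two_ne_zero (hε k hk1 (le_refl k))
        have hxe : xC k k = (2 * ε k)⁻¹ • ⁅H0, yC k k⁆ := by
          rw [hH0, H0_br hk1 ε, smul_smul, inv_mul_cancel₀ hne, one_smul]
        rw [hxe]
        exact S.smul_mem _ (S.lie_mem hH0m hyl)
      have hh : hC k k ∈ S := by
        have hhe : hC k k = (-2 : ℝ)⁻¹ • ⁅xC k k, yC k k⁆ := by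
          rw [xyl hk1, smul_smul]
          norm_num
        rw [hhe]
        exact S.smul_mem _ (S.lie_mem hx hyl)
      exact ⟨hx, hyl, hh⟩
    | succ j ih =>
      intro k hk1 hkl
      have hkl' : k < l := by omega
      obtain ⟨ihx, ihy, ihh⟩ := ih (k+1) (by omega) (by omega)
      have hBmem : ⁅hC l (k+1), H1⁆ ∈ S := S.lie_mem ihh hH1m
      have hB : ⁅hC l (k+1), H1⁆
          = δ k • (-xC l k) + (if k+1 = l then 2 * δ l else δ (k+1)) • xC l (k+1) := by
        rw [hH1]; exact H1_br hk1 hkl' δ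
      have hx : xC l k ∈ S := by
        have hδk := hδ k hk1 (by omega)
        have hxe : xC l k = (δ k)⁻¹ •
            ((if k+1 = l then 2 * δ l else δ (k+1)) • xC l (k+1) - ⁅hC l (k+1), H1⁆) := by
          rw [hB]
          match_scalars <;> field_simp <;> simp
        rw [hxe]
        exact S.smul_mem _ (sub_mem (S.smul_mem _ ihx) hBmem)
      have hy : yC l k ∈ S := by
        rw [← hx_next hk1 hkl']
        exact S.lie_mem ihh hx
      have hh : hC l k ∈ S := by
        have hhe : hC l k = hC l (k+1) - (2:ℝ)⁻¹ • ⁅xC l k, yC l k⁆ := by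
          rw [xy hk1 hkl']
          match_scalars <;> norm_num
        rw [hhe]
        exact sub_mem ihh (S.smul_mem _ (S.lie_mem hx hy))
      exact ⟨hx, hy, hh⟩
  exact key (l - m) m hm1 (by omega)
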